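/- Let X be a pseudometric space, λ ∈ (0,1), and let A : X ≃ X be a bijection with dist(A(x), A(y)) ≤ λ^{-1}·dist(x, y) for all x, y ∈ X. Let 0 ≤ C' < C be reals, let N ∈ ℕ, and let η be a real with 0 ≤ η ≤ λ^N·(C − C'). Then for all subsets L, L' ⊆ X with L' ⊆ cthickening η L and for every n ≤ N, one has cthickening C' ((A^[n]) '' L') ⊆ cthickening C ((A^[n]) '' L). -/

import Mathlib

open Metric Set


private lemma mem_cthick_iff {X : Type*} [PseudoMetricSpace X] {δ : ℝ} (hδ : 0 ≤ δ)
    {s : Set X} (hs : s.Nonempty) (x : X) :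
    x ∈ cthickening δ s ↔ infDist x s ≤ δ := by
  rw [mem_cthickening_iff, Metric.infDist,
    ENNReal.le_ofReal_iff_toReal_le (Metric.infEdist_ne_top hs) hδ]

/-- If `A` expands distances by at most `l⁻¹`, `C' < C` and `L'` lies in the
`η`-neighbourhood of `L` with `η ≤ l ^ N * (C - C')`, then for all `n ≤ N` the
`C'`-thickening of `A^[n] '' L'` is contained in the `C`-thickening of
`A^[n] '' L`. -/
theorem stmt_12 {X : Type*} [PseudoMetricSpace X] (l : ℝ)
    (hl0 : 0 < l) (hl1 : l < 1)
    (A : X ≃ X)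
    (hA : ∀ x y : X, dist (A x) (A y) ≤ l⁻¹ * dist x y)
    (C' C : ℝ) (hC' : 0 ≤ C') (hC'C : C' < C)
    (N : ℕ) (η : ℝ) (hη0 : 0 ≤ η) (hηN : η ≤ l ^ N * (C - C')) :
    ∀ L L' : Set X, L' ⊆ cthickening η L →
      ∀ n : ℕ, n ≤ N →
        cthickening C' ((⇑A)^[n] '' L') ⊆ cthickening C ((⇑A)^[n] '' L) := by
  have hAn : ∀ (n : ℕ) (x y : X), dist ((⇑A)^[n] x) ((⇑A)^[n] y) ≤ l⁻¹ ^ n * dist x y := by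
    intro n
    induction n with
    | zero => simp
    | succ n ih =>
      intro x y
      rw [Function.iterate_succ_apply', Function.iterate_succ_apply']
      calc dist (A ((⇑A)^[n] x)) (A ((⇑A)^[n] y))
          ≤ l⁻¹ * dist ((⇑A)^[n] x) ((⇑A)^[n] y) := hA _ _
        _ ≤ l⁻¹ * (l⁻¹ ^ n * dist x y) := by
            apply mul_le_mul_of_nonneg_left (ih x y)
            positivity
        _ = l⁻¹ ^ (n + 1) * dist x y := by ring
  intro L L' hLL' n hn x hx
  rcases L.eq_empty_or_nonempty with rfl | hL
  · rw [cthickening_empty] at hLL'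
    rw [Set.subset_empty_iff] at hLL'
    simp [hLL', cthickening_empty] at hx
  have hln : (0:ℝ) < l⁻¹ ^ n := by positivity
  -- key inequality: l⁻¹ ^ n * η ≤ C - C'
  have hkey : l⁻¹ ^ n * η ≤ C - C' := by
    have h1 : l⁻¹ ^ n * η ≤ l⁻¹ ^ n * (l ^ N * (C - C')) :=
      mul_le_mul_of_nonneg_left hηN (le_of_lt hln)
    have h2 : l⁻¹ ^ n * (l ^ N * (C - C')) = l ^ (N - n) * (C - C') := by
      have : l ^ N = l ^ n * l ^ (N - n) := by
        rw [← pow_add]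
        congr 1
        omega
      rw [this]
      field_simp
      have hh : l ^ n * l⁻¹ ^ n = 1 := by rw [← mul_pow, mul_inv_cancel₀ (ne_of_gt hl0), one_pow]
      linear_combination (C - C') * hh
    have h3 : l ^ (N - n) ≤ 1 := pow_le_one₀ (le_of_lt hl0) (le_of_lt hl1)
    have h4 : l ^ (N - n) * (C - C') ≤ 1 * (C - C') :=
      mul_le_mul_of_nonneg_right h3 (by linarith)
    linarith [h1, h2 ▸ h1]
  -- nonemptiness
  have hLne : ((⇑A)^[n] '' L).Nonempty := hL.image _
  rcases L'.eq_empty_or_nonempty with rfl | hL'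
  · simp [cthickening_empty] at hx
  have hL'ne : ((⇑A)^[n] '' L').Nonempty := hL'.image _
  have hxd : infDist x ((⇑A)^[n] '' L') ≤ C' :=
    (mem_cthick_iff hC' hL'ne x).mp hx
  rw [mem_cthick_iff (by linarith : (0:ℝ) ≤ C) hLne x]
  -- show infDist x (A^[n] '' L) ≤ C
  apply le_of_forall_pos_le_add
  intro ε hε
  obtain ⟨z, hz, hzd⟩ := (infDist_lt_iff hL'ne).mp
    (show infDist x ((⇑A)^[n] '' L') < C' + ε / 2 by linarith)
  obtain ⟨y', hy', rfl⟩ := hz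
  have hy'c : infDist y' L ≤ η :=
    (mem_cthick_iff hη0 hL y').mp (hLL' hy')
  have hpos : 0 < l ^ n * (ε / 2) := by positivity
  obtain ⟨y, hy, hyd⟩ := (infDist_lt_iff hL).mp
    (show infDist y' L < η + l ^ n * (ε / 2) by linarith)
  have hdist : dist ((⇑A)^[n] y') ((⇑A)^[n] y) ≤ l⁻¹ ^ n * (η + l ^ n * (ε / 2)) :=
    le_trans (hAn n y' y) (mul_le_mul_of_nonneg_left (le_of_lt hyd) (le_of_lt hln))
  have hsimp : l⁻¹ ^ n * (η + l ^ n * (ε / 2)) = l⁻¹ ^ n * η + ε / 2 := by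
    have : l⁻¹ ^ n * l ^ n = 1 := by
      rw [← mul_pow]
      rw [inv_mul_cancel₀ (ne_of_gt hl0)]
      simp
    field_simp
    linear_combination ε * this
  calc infDist x ((⇑A)^[n] '' L)
      ≤ dist x ((⇑A)^[n] y) := infDist_le_dist_of_mem ⟨y, hy, rfl⟩
    _ ≤ dist x ((⇑A)^[n] y') + dist ((⇑A)^[n] y') ((⇑A)^[n] y) := dist_triangle _ _ _
    _ ≤ (C' + ε / 2) + (l⁻¹ ^ n * η + ε / 2) := by
        rw [hsimp] at hdist
        linarith
    _ ≤ C + ε := by linarith
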